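/- arXiv:2202.04278 — 17 statements merged into one kernel-verified Lean document; each statement's English description precedes it below -/
import Mathlib

section
/- ∀∀ soundness for relational models, part (a): for any set Σ, relations c, d on Σ and relations R, S on Σ, the semantic ∀∀ judgment — for all σ,σ',τ,τ', if R σ σ', c σ τ and d σ' τ' then S τ τ' — holds if and only if the relation Ṙ ; ⟨c|d⟩ ; (¬S)̇ on Σ×Σ is empty, where Ṙ and (¬S)̇ are the bitests of R and of the complement of S. -/
namespace BiKAT

variable {S : Type*}

/-- Relational composition: (A ; B) x z iff ∃ y, A x y ∧ B y z. -/
def rcomp {α : Type*} (A B : α → α → Prop) : α → α → Prop :=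
  fun x z => ∃ y, A x y ∧ B y z

/-- Union of relations. -/
def runion {α : Type*} (A B : α → α → Prop) : α → α → Prop :=
  fun x z => A x z ∨ B x z

/-- Reflexive-transitive closure. -/
def rstar {α : Type*} (A : α → α → Prop) : α → α → Prop :=
  Relation.ReflTransGen A

/-- Inclusion of relations, pointwise implication. -/
def rincl {α : Type*} (A B : α → α → Prop) : Prop := ∀ x y, A x y → B x y

/-- Test: sub-identity relation of a set. -/
def test (e : Set S) : S → S → Prop := fun x y => x ∈ e ∧ y = x

/-- Left embedding ⟨c]. -/
def lemb (c : S → S → Prop) : S × S → S × S → Prop :=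
  fun p q => c p.1 q.1 ∧ p.2 = q.2

/-- Right embedding [c⟩. -/
def remb (c : S → S → Prop) : S × S → S × S → Prop :=
  fun p q => c p.2 q.2 ∧ p.1 = q.1

/-- Two-argument embedding ⟨c|d⟩ := ⟨c] ; [d⟩. -/
def emb2 (c d : S → S → Prop) : S × S → S × S → Prop :=
  rcomp (lemb c) (remb d)

/-- Bitest Ṙ: sub-identity relation on Σ×Σ for a relation R on Σ. -/
def bitest (R : S → S → Prop) : S × S → S × S → Prop :=
  fun p q => R p.1 p.2 ∧ q.1 = p.1 ∧ q.2 = p.2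

/-- Havoc: the full relation. -/
def hav : S → S → Prop := fun _ _ => True

/-- while e do c := ([e];c)* ; [¬e]. -/
def wh (e : Set S) (c : S → S → Prop) : S → S → Prop :=
  rcomp (rstar (rcomp (test e) c)) (test eᶜ)

/-- The ∀∀ judgment c | d : R ≈> Sp. -/
def allall (c d R Sp : S → S → Prop) : Prop :=
  ∀ σ σ' τ τ', R σ σ' → c σ τ → d σ' τ' → Sp τ τ'

/-- Forward simulation judgment c | d : R ⇒∃ Sp. -/
def fsim (c d R Sp : S → S → Prop) : Prop :=
  ∀ σ σ' τ, R σ σ' → c σ τ → ∃ τ', d σ' τ' ∧ Sp τ τ'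

/-- Backward simulation judgment c | d : R ⇐∃ Sp. -/
def bsim (c d R Sp : S → S → Prop) : Prop :=
  ∀ σ τ τ', c σ τ → Sp τ τ' → ∃ σ', R σ σ' ∧ d σ' τ'

/-- Triple (componentwise) embedding ⟪a|b|c⟫ on Σ×Σ×Σ. -/
def tri (a b c : S → S → Prop) : S × S × S → S × S × S → Prop :=
  fun p q => a p.1 q.1 ∧ b p.2.1 q.2.1 ∧ c p.2.2 q.2.2

/-- ⟦A ∥ B⟧: pairs of BiKAT elements agreeing on the middle execution. -/
def tpair (A B : S × S → S × S → Prop) : S × S × S → S × S × S → Prop :=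
  fun p q => A (p.1, p.2.1) (q.1, q.2.1) ∧ B (p.2.1, p.2.2) (q.2.1, q.2.2)

/-- ⇙X: projection to the left two of three. -/
def proj2 (X : S × S × S → S × S × S → Prop) : S × S → S × S → Prop :=
  fun p q => ∃ s t, X (p.1, p.2, s) (q.1, q.2, t)

end BiKAT

open BiKAT

/-- ∀∀ soundness for relational models, part (a). -/
theorem stmt2 (S : Type*) (c d R Sp : S → S → Prop) :
    allall c d R Sp ↔
      ∀ p q : S × S,
        ¬ rcomp (rcomp (bitest R) (emb2 c d)) (bitest (fun a b => ¬ Sp a b)) p q := by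
  constructor
  · rintro h p q ⟨z, ⟨x, ⟨hR, hx1, hx2⟩, ⟨y, ⟨hc, hy2⟩, hd, hy1⟩⟩, hnS, hq1, hq2⟩
    refine hnS (h p.1 p.2 z.1 z.2 hR ?_ ?_)
    · rw [hx1, hy1] at hc; exact hc
    · rw [← hy2, hx2] at hd; exact hd
  · intro h σ σ' τ τ' hR hc hd
    by_contra hnS
    exact h (σ, σ') (τ, τ')
      ⟨(τ, τ'), ⟨(σ, σ'), ⟨hR, rfl, rfl⟩, (τ, σ'), ⟨hc, rfl⟩, hd, rfl⟩, hnS, rfl, rfl⟩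
end

section
/- ∀∀ soundness for relational models, part (b): for any set Σ, relations c, d, R, S on Σ, and any relation B on Σ×Σ, if Ṙ ; ⟨c|d⟩ ⊆ Ṙ ; B and the relation Ṙ ; B ; (¬S)̇ is empty, then the semantic ∀∀ judgment holds: for all σ,σ',τ,τ', if R σ σ', c σ τ and d σ' τ' then S τ τ'. -/
open BiKAT

/-- ∀∀ soundness for relational models, part (b). -/
theorem stmt3 (S : Type*) (c d R Sp : S → S → Prop) (B : S × S → S × S → Prop)
    (h1 : rincl (rcomp (bitest R) (emb2 c d)) (rcomp (bitest R) B))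
    (h2 : ∀ p q : S × S,
      ¬ rcomp (rcomp (bitest R) B) (bitest (fun a b => ¬ Sp a b)) p q) :
    allall c d R Sp := by
  intro σ σ' τ τ' hR hc hd
  by_contra hS
  have hx : rcomp (bitest R) (emb2 c d) (σ, σ') (τ, τ') :=
    ⟨(σ, σ'), ⟨hR, rfl, rfl⟩, (τ, σ'), ⟨hc, rfl⟩, hd, rfl⟩
  obtain ⟨m, hm, hB⟩ := h1 _ _ hx
  exact h2 (σ, σ') (τ, τ') ⟨(τ, τ'), ⟨m, hm, hB⟩, hS, rfl, rfl⟩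
end

section
/- The left embedding of the relational model is a homomorphism for Kleene star: for any set Σ and any binary relation c on Σ, the left embedding of the reflexive-transitive closure of c equals the reflexive-transitive closure of the left embedding of c, i.e. ⟨c*] = (⟨c])* as relations on Σ×Σ; and symmetrically [c*⟩ = ([c⟩)*. -/
open BiKAT

/-- The embeddings are homomorphisms for Kleene star. -/
theorem stmt4 (S : Type*) (c : S → S → Prop) :
    lemb (rstar c) = rstar (lemb c) ∧ remb (rstar c) = rstar (remb c) := by
  constructor
  · funext p q
    apply propext
    constructor
    · rintro ⟨h, heq⟩
      obtain ⟨a, b⟩ := p; obtain ⟨a', b'⟩ := q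
      simp only at h heq; subst heq
      induction h with
      | refl => exact Relation.ReflTransGen.refl
      | tail _ hc ih => exact ih.tail ⟨hc, rfl⟩
    · intro h
      induction h with
      | refl => exact ⟨Relation.ReflTransGen.refl, rfl⟩
      | tail _ hc ih => exact ⟨ih.1.tail hc.1, ih.2.trans hc.2⟩
  · funext p q
    apply propext
    constructor
    · rintro ⟨h, heq⟩
      obtain ⟨a, b⟩ := p; obtain ⟨a', b'⟩ := q
      simp only at h heq; subst heq
      induction h with
      | refl => exact Relation.ReflTransGen.refl
      | tail _ hc ih => exact ih.tail ⟨hc, rfl⟩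
    · intro h
      induction h with
      | refl => exact ⟨Relation.ReflTransGen.refl, rfl⟩
      | tail _ hc ih => exact ⟨ih.1.tail hc.1, ih.2.trans hc.2⟩
end

section
/- Lockstep expansion law in the relational model: for any set Σ, relations c, c' on Σ and subsets e, e' of Σ, the following equality of relations on Σ×Σ holds: ⟨([e];c)* ; [¬e] | ([e'];c')* ; [¬e']⟩ = (⟨[e];c | [e'];c'⟩)* ; ((⟨[e];c | [¬e']⟩)* + (⟨[¬e] | [e'];c'⟩)*) ; ⟨[¬e] | [¬e']⟩, where + is union of relations. -/
open BiKAT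

section Helpers

lemma emb2_iff {S : Type*} (A B : S → S → Prop) (p q : S × S) :
    emb2 A B p q ↔ A p.1 q.1 ∧ B p.2 q.2 := by
  constructor
  · rintro ⟨m, ⟨h1, h2⟩, h3, h4⟩
    exact ⟨h4 ▸ h1, h2 ▸ h3⟩
  · rintro ⟨h1, h2⟩
    exact ⟨(q.1, p.2), ⟨h1, rfl⟩, h2, rfl⟩

lemma star_emb2 {S : Type*} {A B : S → S → Prop} {p q : S × S}
    (h : Relation.ReflTransGen (emb2 A B) p q) :
    Relation.ReflTransGen A p.1 q.1 ∧ Relation.ReflTransGen B p.2 q.2 := by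
  induction h with
  | refl => exact ⟨.refl, .refl⟩
  | tail hs hstep ih =>
      rw [emb2_iff] at hstep
      exact ⟨ih.1.tail hstep.1, ih.2.tail hstep.2⟩

lemma star_test {S : Type*} {e : Set S} {x y : S}
    (h : Relation.ReflTransGen (test e) x y) : y = x := by
  induction h with
  | refl => rfl
  | tail _ hstep ih => exact hstep.2.trans ih

lemma lift_left {S : Type*} {A B : S → S → Prop} {σ τ σ' : S}
    (h : Relation.ReflTransGen A σ τ) (hB : B σ' σ') :
    Relation.ReflTransGen (emb2 A B) (σ, σ') (τ, σ') := by
  induction h with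
  | refl => exact .refl
  | tail _ hstep ih => exact ih.tail ((emb2_iff _ _ _ _).2 ⟨hstep, hB⟩)

lemma lift_right {S : Type*} {A B : S → S → Prop} {σ' τ' σ : S}
    (h : Relation.ReflTransGen B σ' τ') (hA : A σ σ) :
    Relation.ReflTransGen (emb2 A B) (σ, σ') (σ, τ') := by
  induction h with
  | refl => exact .refl
  | tail _ hstep ih => exact ih.tail ((emb2_iff _ _ _ _).2 ⟨hA, hstep⟩)

lemma fwd_key {S : Type*} {c c' : S → S → Prop} {e e' : Set S} {σ τ σ' τ' : S}
    (hl : Relation.ReflTransGen (rcomp (test e) c) σ τ)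
    (hr : Relation.ReflTransGen (rcomp (test e') c') σ' τ')
    (hτ : τ ∈ eᶜ) (hτ' : τ' ∈ e'ᶜ) :
    ∃ μ : S × S,
      Relation.ReflTransGen (emb2 (rcomp (test e) c) (rcomp (test e') c')) (σ, σ') μ ∧
      (Relation.ReflTransGen (emb2 (rcomp (test e) c) (test e'ᶜ)) μ (τ, τ') ∨
       Relation.ReflTransGen (emb2 (test eᶜ) (rcomp (test e') c')) μ (τ, τ')) := by
  refine Relation.ReflTransGen.head_induction_on
    (motive := fun x _ => ∀ y, Relation.ReflTransGen (rcomp (test e') c') y τ' →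
      ∃ μ : S × S,
        Relation.ReflTransGen (emb2 (rcomp (test e) c) (rcomp (test e') c')) (x, y) μ ∧
        (Relation.ReflTransGen (emb2 (rcomp (test e) c) (test e'ᶜ)) μ (τ, τ') ∨
         Relation.ReflTransGen (emb2 (test eᶜ) (rcomp (test e') c')) μ (τ, τ'))) hl
    ?_ ?_ σ' hr
  · intro y hy
    exact ⟨(τ, y), .refl, Or.inr (lift_right hy ⟨hτ, rfl⟩)⟩
  · intro a b hstep hrest ih y hy
    rcases hy.cases_head with rfl | ⟨y₁, hstep', hrest'⟩
    · exact ⟨(a, y), .refl,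
        Or.inl (lift_left (Relation.ReflTransGen.head hstep hrest) ⟨hτ', rfl⟩)⟩
    · obtain ⟨μ, hL, hbr⟩ := ih y₁ hrest'
      exact ⟨μ, hL.head ((emb2_iff _ _ _ _).2 ⟨hstep, hstep'⟩), hbr⟩

end Helpers

/-- Lockstep expansion law in the relational model. -/
theorem stmt5 (S : Type*) (c c' : S → S → Prop) (e e' : Set S) :
    emb2 (wh e c) (wh e' c') =
      rcomp
        (rcomp (rstar (emb2 (rcomp (test e) c) (rcomp (test e') c')))
          (runion (rstar (emb2 (rcomp (test e) c) (test e'ᶜ)))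
                  (rstar (emb2 (test eᶜ) (rcomp (test e') c')))))
        (emb2 (test eᶜ) (test e'ᶜ)) := by
  funext p q
  apply propext
  constructor
  · intro h
    rw [emb2_iff] at h
    obtain ⟨⟨τ, hl, hτ, hq1⟩, ⟨τ', hr, hτ', hq2⟩⟩ := h
    obtain ⟨μ, hL, hbr⟩ := fwd_key hl hr hτ hτ'
    exact ⟨(τ, τ'), ⟨μ, hL, hbr⟩, (emb2_iff _ _ _ _).2 ⟨⟨hτ, hq1⟩, ⟨hτ', hq2⟩⟩⟩
  · rintro ⟨ν, ⟨μ, hL, hbr⟩, hfin⟩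
    rw [emb2_iff] at hfin
    obtain ⟨⟨hν1, hq1⟩, hν2, hq2⟩ := hfin
    obtain ⟨hL1, hL2⟩ := star_emb2 hL
    rw [emb2_iff]
    rcases hbr with hA | hB
    · obtain ⟨hA1, hA2⟩ := star_emb2 hA
      have hμν : ν.2 = μ.2 := star_test hA2
      exact ⟨⟨ν.1, hL1.trans hA1, hν1, hq1⟩, ⟨ν.2, hμν ▸ hL2, hν2, hq2⟩⟩
    · obtain ⟨hB1, hB2⟩ := star_emb2 hB
      have hμν : ν.1 = μ.1 := star_test hB1
      exact ⟨⟨ν.1, hμν ▸ hL1, hν1, hq1⟩, ⟨ν.2, hL2.trans hB2, hν2, hq2⟩⟩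
end

section
/- Order separation for relational embeddings: for any set Σ and binary relations a, b on Σ, if the right embedding of b is contained in the left embedding of a (i.e. [b⟩ ⊆ ⟨a] as relations on Σ×Σ) and both a and b are nonempty, then the identity relation on Σ is contained in a and b is contained in the identity relation on Σ. -/
open BiKAT

/-- Order separation for relational embeddings. -/
theorem stmt6 (S : Type*) (a b : S → S → Prop)
    (h : rincl (remb b) (lemb a))
    (ha : ∃ x y, a x y) (hb : ∃ x y, b x y) :
    (∀ x, a x x) ∧ (∀ x y, b x y → x = y) := by
  constructor
  · intro x
    obtain ⟨u, v, huv⟩ := hb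
    exact (h (x, u) (x, v) ⟨huv, rfl⟩).1
  · intro x y hxy
    obtain ⟨u, _⟩ := ha
    exact (h (u, x) (u, y) ⟨hxy, rfl⟩).2
end

section
/- TriKAT characterization of forward simulation (forward part of the lemma): for any set Σ and relations c, d, R, S on Σ, the forward simulation judgment c | d : R ⇒∃ S holds if and only if Ṙ ; ⟨c | hav⟩ ; (id)̇ ⊆ ⇙( ⟦Ṙ ∥ (id)̇⟧ ; ⟪c | hav | d⟫ ; ⟦(id)̇ ∥ Ṡ⟧ ), where the left-hand side is a relation on Σ×Σ, hav is the full relation on Σ, id is the identity relation on Σ, ⟪a|b|c⟫ is the componentwise triple embedding on Σ×Σ×Σ, ⟦A ∥ B⟧ relates triples (σ,σ',σ'') to (τ,τ',τ'') iff (σ,σ') A (τ,τ') and (σ',σ'') B (τ',τ''), and ⇙X relates (σ,σ') to (τ,τ') iff there exist σ'', τ'' with (σ,σ',σ'') X (τ,τ',τ''). -/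
open BiKAT

/-- TriKAT characterization of forward simulation. -/
theorem stmt7 (S : Type*) (c d R Sp : S → S → Prop) :
    fsim c d R Sp ↔
      rincl (rcomp (rcomp (bitest R) (emb2 c hav)) (bitest (fun x y => x = y)))
        (proj2 (rcomp
          (rcomp (tpair (bitest R) (bitest (fun x y => x = y))) (tri c hav d))
          (tpair (bitest (fun x y => x = y)) (bitest Sp)))) := by
  constructor
  · rintro h ⟨σ, σ'⟩ ⟨τ, τ'⟩ ⟨m, ⟨p, ⟨hR, hp1, hp2⟩, q, ⟨hc, hq2⟩, hhav, hq1⟩, hid, hτ, hτ'⟩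
    simp only at *
    have hττ' : τ' = τ := by rw [hτ', ← hid, ← hτ]
    have hcτ : c σ τ := by rw [hτ, ← hq1, ← hp1]; exact hc
    obtain ⟨t, hd, hS⟩ := h σ σ' τ hR hcτ
    exact ⟨σ', t, ⟨(τ, τ, t), ⟨(σ, σ', σ'), ⟨⟨hR, rfl, rfl⟩, rfl, rfl, rfl⟩,
      hcτ, trivial, hd⟩, ⟨rfl, rfl, hττ'⟩, hS, hττ', rfl⟩⟩
  · intro h σ σ' τ hR hc
    obtain ⟨s, t, ⟨y, ⟨x, ⟨⟨hR', hxa, hxb⟩, hid', hxc, hxd⟩,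
      hcx, _, hdx⟩, ⟨hyid, hy1, hy2⟩, hySp, hy3, hy4⟩⟩ :=
      h (σ, σ') (τ, τ) ⟨(τ, τ), ⟨(σ, σ'), ⟨hR, rfl, rfl⟩, ⟨(τ, σ'), ⟨hc, rfl⟩, trivial, rfl⟩⟩,
        rfl, rfl, rfl⟩
    simp only at *
    refine ⟨y.2.2, ?_, ?_⟩
    · rw [hid', ← hxd]; exact hdx
    · rw [hy3]; exact hySp
end

section
/- Soundness of the relational-Hoare-logic rule dIf in the relational model: for any set Σ, relations c, c', d, d', P, Q on Σ and subsets e, e' of Σ, suppose (i) P σ σ' implies (σ ∈ e ↔ σ' ∈ e') for all σ, σ'; (ii) the ∀∀ judgment c | c' : (P ∧ ⌐e ∧ e'⌐) ≈> Q holds, where (P ∧ ⌐e ∧ e'⌐) σ σ' means P σ σ' ∧ σ ∈ e ∧ σ' ∈ e'; and (iii) the ∀∀ judgment d | d' : (P ∧ ⌐¬e ∧ ¬e'⌐) ≈> Q holds. Then the ∀∀ judgment ([e];c + [¬e];d) | ([e'];c' + [¬e'];d') : P ≈> Q holds, where + is union. -/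
open BiKAT

/-- Soundness of rule dIf in the relational model. -/
theorem stmt9 (S : Type*) (c c' d d' P Q : S → S → Prop) (e e' : Set S)
    (h0 : ∀ σ σ', P σ σ' → (σ ∈ e ↔ σ' ∈ e'))
    (h1 : allall c c' (fun σ σ' => P σ σ' ∧ σ ∈ e ∧ σ' ∈ e') Q)
    (h2 : allall d d' (fun σ σ' => P σ σ' ∧ σ ∉ e ∧ σ' ∉ e') Q) :
    allall (runion (rcomp (test e) c) (rcomp (test eᶜ) d))
           (runion (rcomp (test e') c') (rcomp (test e'ᶜ) d')) P Q := by
  rintro σ σ' τ τ' hP (⟨y, ⟨he, hy⟩, hc⟩ | ⟨y, ⟨he, hy⟩, hd⟩)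
    (⟨y', ⟨he', hy'⟩, hc'⟩ | ⟨y', ⟨he', hy'⟩, hd'⟩) <;> subst hy <;> subst hy'
  · exact h1 y y' τ τ' ⟨hP, he, he'⟩ hc hc'
  · exact absurd ((h0 y y' hP).mp he) he'
  · exact absurd ((h0 y y' hP).mpr he') he
  · exact h2 y y' τ τ' ⟨hP, he, he'⟩ hd hd'
end

section
/- Soundness of the relational-Hoare-logic rule dWh (lockstep while rule) in the relational model: for any set Σ, relations c, c', P on Σ and subsets e, e' of Σ, suppose (i) P σ σ' implies (σ ∈ e ↔ σ' ∈ e') for all σ, σ'; and (ii) the ∀∀ judgment c | c' : (P ∧ ⌐e ∧ e'⌐) ≈> P holds, where (P ∧ ⌐e ∧ e'⌐) σ σ' means P σ σ' ∧ σ ∈ e ∧ σ' ∈ e'. Then the ∀∀ judgment (while e do c) | (while e' do c') : P ≈> (P ∧ ⌐¬e ∧ ¬e'⌐) holds, where while e do c := ([e];c)* ; [¬e]. -/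
open BiKAT

/-- Soundness of the lockstep while rule dWh. -/
theorem stmt10 (S : Type*) (c c' P : S → S → Prop) (e e' : Set S)
    (h0 : ∀ σ σ', P σ σ' → (σ ∈ e ↔ σ' ∈ e'))
    (h1 : allall c c' (fun σ σ' => P σ σ' ∧ σ ∈ e ∧ σ' ∈ e') P) :
    allall (wh e c) (wh e' c') P (fun τ τ' => P τ τ' ∧ τ ∉ e ∧ τ' ∉ e') := by
  rintro σ σ' τ τ' hP ⟨u, hst, hu, rfl⟩ ⟨u', hst', hu', rfl⟩
  suffices h : P τ τ' from ⟨h, hu, hu'⟩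
  induction hst using Relation.ReflTransGen.head_induction_on generalizing σ' with
  | refl =>
    rcases hst'.cases_head with rfl | ⟨ρ', ⟨_, ⟨he', rfl⟩, _⟩, _⟩
    · exact hP
    · exact absurd ((h0 _ _ hP).mpr he') hu
  | head hstep _ ih =>
    obtain ⟨_, ⟨he, rfl⟩, hc⟩ := hstep
    rcases hst'.cases_head with rfl | ⟨ρ', ⟨_, ⟨he', rfl⟩, hc'⟩, htail'⟩
    · exact absurd ((h0 _ _ hP).mp he) hu'
    · exact ih _ (h1 _ _ _ _ ⟨hP, he, he'⟩ hc hc') htail'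
end

section
/- Conditionally-aligned expansion law in the relational model: for any set Σ, relations c, c' on Σ, subsets e, e' of Σ, and relations Q, R on Σ (used as bitests Q̇, Ṙ on Σ×Σ), the following equality of relations on Σ×Σ holds: (⟨[e];c])* ; ⟨[¬e]] ; ([[e'];c'⟩)* ; [[¬e']⟩ = ( Q̇;⟨[e];c] + Ṙ;[[e'];c'⟩ + (¬Q)̇;(¬R)̇;⟨[e];c | [e'];c'⟩ + (¬Q)̇;⟨[e];c | [¬e']⟩ + (¬R)̇;⟨[¬e] | [e'];c'⟩ )* ; ⟨[¬e] | [¬e']⟩, where + is union and * is reflexive-transitive closure. -/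
open BiKAT

open Relation

lemma lift_lemb {S : Type*} {c : S → S → Prop} {a b : S} (h : ReflTransGen c a b) (s : S) :
    ReflTransGen (lemb c) (a, s) (b, s) := by
  induction h with
  | refl => exact .refl
  | tail _ hstep ih => exact ih.tail ⟨hstep, rfl⟩

lemma lift_remb {S : Type*} {c : S → S → Prop} {a b : S} (h : ReflTransGen c a b) (s : S) :
    ReflTransGen (remb c) (s, a) (s, b) := by
  induction h with
  | refl => exact .refl
  | tail _ hstep ih => exact ih.tail ⟨hstep, rfl⟩

lemma proj_lemb {S : Type*} {c : S → S → Prop} {p q : S × S}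
    (h : ReflTransGen (lemb c) p q) : ReflTransGen c p.1 q.1 ∧ p.2 = q.2 := by
  induction h with
  | refl => exact ⟨.refl, rfl⟩
  | tail _ hstep ih => exact ⟨ih.1.tail hstep.1, ih.2.trans hstep.2⟩

lemma proj_remb {S : Type*} {c : S → S → Prop} {p q : S × S}
    (h : ReflTransGen (remb c) p q) : ReflTransGen c p.2 q.2 ∧ p.1 = q.1 := by
  induction h with
  | refl => exact ⟨.refl, rfl⟩
  | tail _ hstep ih => exact ⟨ih.1.tail hstep.1, ih.2.trans hstep.2⟩

/-- Conditionally-aligned expansion law in the relational model. -/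
theorem stmt11 (S : Type*) (c c' : S → S → Prop) (e e' : Set S) (Q R : S → S → Prop) :
    rcomp
      (rcomp (rcomp (rstar (lemb (rcomp (test e) c))) (lemb (test eᶜ)))
        (rstar (remb (rcomp (test e') c'))))
      (remb (test e'ᶜ)) =
    rcomp
      (rstar (runion (runion (runion (runion
        (rcomp (bitest Q) (lemb (rcomp (test e) c)))
        (rcomp (bitest R) (remb (rcomp (test e') c'))))
        (rcomp (bitest (fun a b => ¬ Q a b))
          (rcomp (bitest (fun a b => ¬ R a b))
            (emb2 (rcomp (test e) c) (rcomp (test e') c')))))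
        (rcomp (bitest (fun a b => ¬ Q a b)) (emb2 (rcomp (test e) c) (test e'ᶜ))))
        (rcomp (bitest (fun a b => ¬ R a b)) (emb2 (test eᶜ) (rcomp (test e') c')))))
      (emb2 (test eᶜ) (test e'ᶜ)) := by
  funext p q
  apply propext
  set L := rcomp (test e) c with hLdef
  set R' := rcomp (test e') c' with hRdef
  set U := (runion (runion (runion (runion
        (rcomp (bitest Q) (lemb L))
        (rcomp (bitest R) (remb R')))
        (rcomp (bitest (fun a b => ¬ Q a b))
          (rcomp (bitest (fun a b => ¬ R a b)) (emb2 L R'))))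
        (rcomp (bitest (fun a b => ¬ Q a b)) (emb2 L (test e'ᶜ))))
        (rcomp (bitest (fun a b => ¬ R a b)) (emb2 (test eᶜ) R'))) with hUdef
  obtain ⟨p1, p2⟩ := p
  obtain ⟨q1, q2⟩ := q
  constructor
  · rintro ⟨m3, ⟨m2, ⟨m1, hstar1, ht1⟩, hstar2⟩, ht2⟩
    have hl0 : ReflTransGen L p1 m1.1 ∧ p2 = m1.2 := proj_lemb hstar1
    have hr0 := proj_remb hstar2
    have ht2' : (m3.2 ∈ e'ᶜ ∧ q2 = m3.2) ∧ m3.1 = q1 := ht2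
    have hq1 : m1.1 = q1 := (ht1.1.2.symm.trans hr0.2).trans ht2'.2
    have hl : ReflTransGen L p1 q1 := by rw [← hq1]; exact hl0.1
    have he1 : q1 ∈ eᶜ := by rw [← hq1]; exact ht1.1.1
    have hr : ReflTransGen R' p2 q2 := by
      rw [hl0.2, ht1.2, ht2'.1.2]
      exact hr0.1
    have he2 : q2 ∈ e'ᶜ := by rw [ht2'.1.2]; exact ht2'.1.1
    have key : ∀ x, ReflTransGen L x q1 → ∀ y, ReflTransGen R' y q2 →
        ReflTransGen U (x, y) (q1, q2) := by
      intro x hx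
      induction hx using Relation.ReflTransGen.head_induction_on with
      | refl =>
        intro y hy
        induction hy using Relation.ReflTransGen.head_induction_on with
        | refl => exact .refl
        | head hstepR htraceR ihR =>
          rename_i y y'
          by_cases hRxy : R q1 y
          · refine ReflTransGen.head ?_ ihR
            exact Or.inl (Or.inl (Or.inl (Or.inr ⟨(q1, y), ⟨hRxy, rfl, rfl⟩, hstepR, rfl⟩)))
          · refine ReflTransGen.head ?_ ihR
            exact Or.inr ⟨(q1, y), ⟨hRxy, rfl, rfl⟩, (q1, y), ⟨⟨he1, rfl⟩, rfl⟩, hstepR, rfl⟩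
      | head hstepL htraceL ihL =>
        rename_i x x'
        intro y hy
        induction hy using Relation.ReflTransGen.head_induction_on with
        | refl =>
          by_cases hQ : Q x q2
          · refine ReflTransGen.head ?_ (ihL q2 .refl)
            exact Or.inl (Or.inl (Or.inl (Or.inl ⟨(x, q2), ⟨hQ, rfl, rfl⟩, hstepL, rfl⟩)))
          · refine ReflTransGen.head ?_ (ihL q2 .refl)
            exact Or.inl (Or.inr ⟨(x, q2), ⟨hQ, rfl, rfl⟩,
              (x', q2), ⟨hstepL, rfl⟩, ⟨he2, rfl⟩, rfl⟩)
        | head hstepR htraceR ihR =>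
          rename_i y y'
          by_cases hQ : Q x y
          · refine ReflTransGen.head ?_ (ihL y (ReflTransGen.head hstepR htraceR))
            exact Or.inl (Or.inl (Or.inl (Or.inl ⟨(x, y), ⟨hQ, rfl, rfl⟩, hstepL, rfl⟩)))
          · by_cases hRxy : R x y
            · refine ReflTransGen.head ?_ ihR
              exact Or.inl (Or.inl (Or.inl (Or.inr ⟨(x, y), ⟨hRxy, rfl, rfl⟩, hstepR, rfl⟩)))
            · refine ReflTransGen.head ?_ (ihL y' htraceR)
              exact Or.inl (Or.inl (Or.inr ⟨(x, y), ⟨hQ, rfl, rfl⟩, (x, y), ⟨hRxy, rfl, rfl⟩,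
                (x', y), ⟨hstepL, rfl⟩, hstepR, rfl⟩))
    exact ⟨(q1, q2), key p1 hl p2 hr, (q1, q2), ⟨⟨he1, rfl⟩, rfl⟩, ⟨he2, rfl⟩, rfl⟩
  · rintro ⟨m, hstar, n, ht1, ht2⟩
    -- ht1 : lemb (test eᶜ) m n, ht2 : remb (test e'ᶜ) n (q1, q2)
    have ustep : ∀ (a b : S × S), U a b →
        ReflTransGen L a.1 b.1 ∧ ReflTransGen R' a.2 b.2 := by
      rintro a b ((((h | h) | h) | h) | h)
      · obtain ⟨w, hw, hs, h2⟩ := h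
        constructor
        · rw [← hw.2.1]; exact .single hs
        · rw [← hw.2.2, h2]
      · obtain ⟨w, hw, hs, h2⟩ := h
        constructor
        · rw [← hw.2.1, h2]
        · rw [← hw.2.2]; exact .single hs
      · obtain ⟨w, hw, v, hv, u, ⟨hl, hu2⟩, hr, hu1⟩ := h
        constructor
        · rw [← hw.2.1, ← hv.2.1, ← hu1]; exact .single hl
        · rw [← hw.2.2, ← hv.2.2, hu2]; exact .single hr
      · obtain ⟨w, hw, u, ⟨hl, hu2⟩, ⟨_, hb2⟩, hu1⟩ := h
        constructor
        · rw [← hw.2.1, ← hu1]; exact .single hl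
        · rw [← hw.2.2, hu2, hb2]
      · obtain ⟨w, hw, u, ⟨⟨_, hu1eq⟩, hu2⟩, hr, hu1⟩ := h
        constructor
        · rw [← hw.2.1, ← hu1, hu1eq]
        · rw [← hw.2.2, hu2]; exact .single hr
    have hM : ∀ (a b : S × S), ReflTransGen U a b →
        ReflTransGen L a.1 b.1 ∧ ReflTransGen R' a.2 b.2 := by
      intro a b h
      induction h with
      | refl => exact ⟨.refl, .refl⟩
      | tail _ hstep ih =>
        obtain ⟨hl, hr⟩ := ustep _ _ hstep
        exact ⟨ih.1.trans hl, ih.2.trans hr⟩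
    have hml : ReflTransGen L p1 m.1 := (hM _ _ hstar).1
    have hmr : ReflTransGen R' p2 m.2 := (hM _ _ hstar).2
    have ht2' : (n.2 ∈ e'ᶜ ∧ q2 = n.2) ∧ n.1 = q1 := ht2
    have hq1 : m.1 = q1 := ht1.1.2.symm.trans ht2'.2
    have hq2 : q2 = m.2 := ht2'.1.2.trans ht1.2.symm
    have he1 : q1 ∈ eᶜ := by rw [← hq1]; exact ht1.1.1
    have he2 : q2 ∈ e'ᶜ := by rw [ht2'.1.2]; exact ht2'.1.1
    have hl' : ReflTransGen L p1 q1 := by rw [← hq1]; exact hml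
    have hr' : ReflTransGen R' p2 q2 := by rw [hq2]; exact hmr
    exact ⟨(q1, q2), ⟨(q1, p2), ⟨(q1, p2), lift_lemb hl' p2, ⟨he1, rfl⟩, rfl⟩,
      lift_remb hr' q1⟩, ⟨he2, rfl⟩, rfl⟩
end

section
/- Soundness of the conditionally-aligned while rule caWh in the relational model: for any set Σ, relations c, c', P, Q, R on Σ and subsets e, e' of Σ, suppose (i) c | c' : (P ∧ ⌐e ∧ e'⌐ ∧ ¬Q ∧ ¬R) ≈> P; (ii) c | skip : (P ∧ Q ∧ ⌐e⌐) ≈> P, where skip is the identity relation; (iii) skip | c' : (P ∧ R ∧ e'⌐) ≈> P; and (iv) for all σ, σ' with P σ σ': (σ ∈ e ↔ σ' ∈ e') or (Q σ σ' and σ ∈ e) or (R σ σ' and σ' ∈ e'). Then the ∀∀ judgment (while e do c) | (while e' do c') : P ≈> (P ∧ ⌐¬e ∧ ¬e'⌐) holds. Here conjunction of a relation with left/right state conditions is pointwise, e.g. (P ∧ ⌐e ∧ e'⌐) σ σ' means P σ σ' ∧ σ ∈ e ∧ σ' ∈ e', and while e do c := ([e];c)* ; [¬e]. -/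
open BiKAT

def iterR {α : Type*} (A : α → α → Prop) : ℕ → α → α → Prop
  | 0 => fun x z => z = x
  | n+1 => fun x z => ∃ y, A x y ∧ iterR A n y z

lemma rtg_iter {α : Type*} {A : α → α → Prop} {x z : α}
    (h : Relation.ReflTransGen A x z) : ∃ n, iterR A n x z := by
  induction h using Relation.ReflTransGen.head_induction_on with
  | refl => exact ⟨0, rfl⟩
  | head hab _ ih => obtain ⟨n, hn⟩ := ih; exact ⟨n+1, _, hab, hn⟩

lemma stmt12_key (S : Type*) (c c' P Q R : S → S → Prop) (e e' : Set S)
    (h1 : allall c c'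
      (fun σ σ' => P σ σ' ∧ σ ∈ e ∧ σ' ∈ e' ∧ ¬ Q σ σ' ∧ ¬ R σ σ') P)
    (h2 : allall c (fun x y => x = y) (fun σ σ' => P σ σ' ∧ Q σ σ' ∧ σ ∈ e) P)
    (h3 : allall (fun x y => x = y) c' (fun σ σ' => P σ σ' ∧ R σ σ' ∧ σ' ∈ e') P)
    (h4 : ∀ σ σ', P σ σ' →
      ((σ ∈ e ↔ σ' ∈ e') ∨ (Q σ σ' ∧ σ ∈ e) ∨ (R σ σ' ∧ σ' ∈ e'))) :
    ∀ k n m σ σ' τ τ', n + m = k →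
      iterR (rcomp (test e) c) n σ τ → τ ∉ e →
      iterR (rcomp (test e') c') m σ' τ' → τ' ∉ e' →
      P σ σ' → P τ τ' := by
  intro k
  induction k using Nat.strong_induction_on with
  | _ k ih =>
  intro n m σ σ' τ τ' hk hl hτ hr hτ' hP
  by_cases hσ : σ ∈ e
  · -- left guard true; decide whether to step left, right, or both
    by_cases hQ : Q σ σ'
    · -- left-only step
      cases n with
      | zero => exact absurd (hl ▸ hσ) hτ
      | succ n' =>
        obtain ⟨υ, ⟨y, ⟨_, heq⟩, hc⟩, hl'⟩ := hl
        rw [heq] at hc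
        have hP' : P υ σ' := h2 σ σ' υ σ' ⟨hP, hQ, hσ⟩ hc rfl
        exact ih (n' + m) (by omega) n' m υ σ' τ τ' rfl hl' hτ hr hτ' hP'
    · by_cases hR : R σ σ'
      · by_cases hσ' : σ' ∈ e'
        · -- right-only step
          cases m with
          | zero => exact absurd (hr ▸ hσ') hτ'
          | succ m' =>
            obtain ⟨υ', ⟨y, ⟨_, heq'⟩, hc'⟩, hr'⟩ := hr
            rw [heq'] at hc'
            have hP' : P σ υ' := h3 σ σ' σ υ' ⟨hP, hR, hσ'⟩ rfl hc'
            exact ih (n + m') (by omega) n m' σ υ' τ τ' rfl hl hτ hr' hτ' hP'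
        · -- h4 forces Q or e' ; contradiction routes: use h4
          rcases h4 σ σ' hP with hiff | ⟨hq, _⟩ | ⟨_, he'⟩
          · exact absurd (hiff.mp hσ) hσ'
          · exact absurd hq hQ
          · exact absurd he' hσ'
      · -- neither Q nor R: σ' ∈ e' by h4, step both
        have hσ' : σ' ∈ e' := by
          rcases h4 σ σ' hP with hiff | ⟨hq, _⟩ | ⟨_, he'⟩
          · exact hiff.mp hσ
          · exact absurd hq hQ
          · exact he'
        cases n with
        | zero => exact absurd (hl ▸ hσ) hτ
        | succ n' =>
          cases m with
          | zero => exact absurd (hr ▸ hσ') hτ'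
          | succ m' =>
            obtain ⟨υ, ⟨y, ⟨_, heq⟩, hc⟩, hl'⟩ := hl
            rw [heq] at hc
            obtain ⟨υ', ⟨y, ⟨_, heq'⟩, hc'⟩, hr'⟩ := hr
            rw [heq'] at hc'
            have hP' : P υ υ' := h1 σ σ' υ υ' ⟨hP, hσ, hσ', hQ, hR⟩ hc hc'
            exact ih (n' + m') (by omega) n' m' υ υ' τ τ' rfl hl' hτ hr' hτ' hP'
  · -- left guard false: left loop is done (τ = σ)
    have hτσ : τ = σ := by
      cases n with
      | zero => exact hl
      | succ n' => obtain ⟨υ, ⟨y, ⟨he, _⟩, _⟩, _⟩ := hl; exact absurd he hσ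
    rw [hτσ]
    by_cases hσ' : σ' ∈ e'
    · -- must be R-step on the right
      have hR : R σ σ' := by
        rcases h4 σ σ' hP with hiff | ⟨_, he⟩ | ⟨hr', _⟩
        · exact absurd (hiff.mpr hσ') hσ
        · exact absurd he hσ
        · exact hr'
      cases m with
      | zero => exact absurd (hr ▸ hσ') hτ'
      | succ m' =>
        obtain ⟨υ', ⟨y, ⟨_, heq'⟩, hc'⟩, hr'⟩ := hr
        rw [heq'] at hc'
        have hP' : P σ υ' := h3 σ σ' σ υ' ⟨hP, hR, hσ'⟩ rfl hc'
        have hl0 : iterR (rcomp (test e) c) 0 σ σ := rfl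
        exact ih (0 + m') (by omega) 0 m' σ υ' σ τ' rfl hl0 hσ hr' hτ' hP'
    · -- both done
      have hτ'σ' : τ' = σ' := by
        cases m with
        | zero => exact hr
        | succ m' => obtain ⟨υ, ⟨y, ⟨he, _⟩, _⟩, _⟩ := hr; exact absurd he hσ'
      rw [hτ'σ']
      exact hP

/-- Soundness of the conditionally-aligned while rule caWh. -/
theorem stmt12 (S : Type*) (c c' P Q R : S → S → Prop) (e e' : Set S)
    (h1 : allall c c'
      (fun σ σ' => P σ σ' ∧ σ ∈ e ∧ σ' ∈ e' ∧ ¬ Q σ σ' ∧ ¬ R σ σ') P)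
    (h2 : allall c (fun x y => x = y) (fun σ σ' => P σ σ' ∧ Q σ σ' ∧ σ ∈ e) P)
    (h3 : allall (fun x y => x = y) c' (fun σ σ' => P σ σ' ∧ R σ σ' ∧ σ' ∈ e') P)
    (h4 : ∀ σ σ', P σ σ' →
      ((σ ∈ e ↔ σ' ∈ e') ∨ (Q σ σ' ∧ σ ∈ e) ∨ (R σ σ' ∧ σ' ∈ e'))) :
    allall (wh e c) (wh e' c') P (fun τ τ' => P τ τ' ∧ τ ∉ e ∧ τ' ∉ e') := by
  intro σ σ' τ τ' hP hw hw'
  obtain ⟨u, hst, hu, heq⟩ := hw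
  obtain ⟨u', hst', hu', heq'⟩ := hw'
  rw [heq, heq']
  obtain ⟨n, hn⟩ := rtg_iter hst
  obtain ⟨m, hm⟩ := rtg_iter hst'
  exact ⟨stmt12_key S c c' P Q R e e' h1 h2 h3 h4 (n + m) n m σ σ' u u' rfl
      hn hu hm hu' hP, hu, hu'⟩
end

section
/- Forward witness soundness: for any set Σ, relations c, d, R, S on Σ, and any relation W on Σ×Σ, if W is f-valid, i.e. (WC) Ṙ ; W ⊆ Ṙ ; W ; Ṡ, (WO) Ṙ ; ⟨c] ⊆ W ; [hav⟩, and (WU) Ṙ ; W ⊆ ⟨hav | d⟩, then the forward simulation judgment c | d : R ⇒∃ S holds: for all σ, σ', τ with R σ σ' and c σ τ there exists τ' with d σ' τ' and S τ τ'. -/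
open BiKAT

/-- Forward witness soundness. -/
theorem stmt13 (S : Type*) (c d R Sp : S → S → Prop) (W : S × S → S × S → Prop)
    (hWC : rincl (rcomp (bitest R) W) (rcomp (rcomp (bitest R) W) (bitest Sp)))
    (hWO : rincl (rcomp (bitest R) (lemb c)) (rcomp W (remb hav)))
    (hWU : rincl (rcomp (bitest R) W) (emb2 hav d)) :
    fsim c d R Sp := by
  intro σ σ' τ hR hc
  obtain ⟨m, hW, hrm⟩ := hWO (σ,σ') (τ,σ')
    ⟨(σ,σ'), ⟨hR, rfl, rfl⟩, ⟨hc, rfl⟩⟩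
  obtain ⟨mτ, mx⟩ := m
  obtain ⟨-, h1⟩ := hrm
  simp only at h1
  subst h1
  have hRW : rcomp (bitest R) W (σ,σ') (mτ,mx) := ⟨(σ,σ'), ⟨hR, rfl, rfl⟩, hW⟩
  obtain ⟨y, hl, hr⟩ := hWU _ _ hRW
  obtain ⟨y1, y2⟩ := y
  obtain ⟨-, hy2⟩ := hl
  obtain ⟨hd, -⟩ := hr
  simp only at hy2 hd
  subst hy2
  obtain ⟨uv, hRW2, hSp, h2, h3⟩ := hWC _ _ hRW
  simp only at h2 h3
  refine ⟨mx, hd, ?_⟩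
  rw [← h2, ← h3] at hSp
  exact hSp
end

section
/- Backward witness soundness: for any set Σ, relations c, d, R, S on Σ, and any relation W on Σ×Σ, if W is b-valid, i.e. (WCb) W ; Ṡ ⊆ Ṙ ; W ; Ṡ, (WOb) ⟨c] ; Ṡ ⊆ [hav⟩ ; W, and (WUb) W ; Ṡ ⊆ ⟨hav | d⟩, then the backward simulation judgment c | d : R ⇐∃ S holds: for all σ, τ, τ' with c σ τ and S τ τ' there exists σ' with R σ σ' and d σ' τ'. -/
open BiKAT

/-- Backward witness soundness. -/
theorem stmt14 (S : Type*) (c d R Sp : S → S → Prop) (W : S × S → S × S → Prop)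
    (hWCb : rincl (rcomp W (bitest Sp)) (rcomp (rcomp (bitest R) W) (bitest Sp)))
    (hWOb : rincl (rcomp (lemb c) (bitest Sp)) (rcomp (remb hav) W))
    (hWUb : rincl (rcomp W (bitest Sp)) (emb2 hav d)) :
    bsim c d R Sp := by
  intro σ τ τ' hc hS
  obtain ⟨m, ⟨_, hm1⟩, hW⟩ := hWOb (σ, τ') (τ, τ') ⟨(τ, τ'), ⟨hc, rfl⟩, ⟨hS, rfl, rfl⟩⟩
  obtain ⟨m1, m2⟩ := m
  simp only at hm1; subst hm1
  obtain ⟨q, ⟨p, hbR, hWp⟩, hbq⟩ := hWCb (σ, m2) (τ, τ') ⟨(τ, τ'), hW, hS, rfl, rfl⟩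
  obtain ⟨hR, hp1, hp2⟩ := hbR
  have hp : p = (σ, m2) := Prod.ext hp1 hp2
  subst hp
  obtain ⟨hSq, hq1, hq2⟩ := hbq
  have hq : q = (τ, τ') := Prod.ext hq1.symm hq2.symm
  subst hq
  obtain ⟨y, ⟨_, hy2⟩, hd, hy1⟩ := hWUb (σ, m2) (τ, τ') ⟨(τ, τ'), hWp, hSq, rfl, rfl⟩
  exact ⟨m2, hR, by rw [← hy2] at hd; exact hd⟩
end

section
/- Witness completeness for forward simulation: for any set Σ and relations c, d, R, S on Σ, the forward simulation judgment c | d : R ⇒∃ S holds if and only if there exists a relation W on Σ×Σ that is f-valid, i.e. satisfying (WC) Ṙ ; W ⊆ Ṙ ; W ; Ṡ, (WO) Ṙ ; ⟨c] ⊆ W ; [hav⟩, and (WU) Ṙ ; W ⊆ ⟨hav | d⟩. -/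
open BiKAT

/-- Witness completeness for forward simulation. -/
theorem stmt15 (S : Type*) (c d R Sp : S → S → Prop) :
    fsim c d R Sp ↔
      ∃ W : S × S → S × S → Prop,
        rincl (rcomp (bitest R) W) (rcomp (rcomp (bitest R) W) (bitest Sp)) ∧
        rincl (rcomp (bitest R) (lemb c)) (rcomp W (remb hav)) ∧
        rincl (rcomp (bitest R) W) (emb2 hav d) := by
  constructor
  · intro h
    refine ⟨fun p q => c p.1 q.1 ∧ d p.2 q.2 ∧ Sp q.1 q.2, ?_, ?_, ?_⟩
    · rintro ⟨σ, σ'⟩ ⟨τ, τ'⟩ ⟨⟨m1, m2⟩, ⟨hR, h1, h2⟩, hc, hd, hS⟩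
      simp only at h1 h2 hc hd hS ⊢
      cases h1; cases h2
      exact ⟨(τ, τ'), ⟨(σ, σ'), ⟨hR, rfl, rfl⟩, hc, hd, hS⟩, hS, rfl, rfl⟩
    · rintro ⟨σ, σ'⟩ ⟨τ, τ₂⟩ ⟨⟨m1, m2⟩, ⟨hR, h1, h2⟩, hc, he⟩
      simp only at h1 h2 hc he
      cases h1; cases h2; cases he
      obtain ⟨τ', hd, hS⟩ := h σ σ' τ hR hc
      exact ⟨(τ, τ'), ⟨hc, hd, hS⟩, trivial, rfl⟩
    · rintro ⟨σ, σ'⟩ ⟨τ, τ'⟩ ⟨⟨m1, m2⟩, ⟨hR, h1, h2⟩, hc, hd, hS⟩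
      simp only at h1 h2 hc hd
      cases h1; cases h2
      exact ⟨(τ, σ'), ⟨trivial, rfl⟩, hd, rfl⟩
  · rintro ⟨W, hWC, hWO, hWU⟩ σ σ' τ hR hc
    obtain ⟨⟨m1, m2⟩, hW, -, heq⟩ :=
      hWO (σ, σ') (τ, σ') ⟨(σ, σ'), ⟨hR, rfl, rfl⟩, hc, rfl⟩
    simp only at heq
    cases heq
    obtain ⟨⟨n1, n2⟩, hRW, hS, h1, h2⟩ :=
      hWC (σ, σ') (τ, m2) ⟨(σ, σ'), ⟨hR, rfl, rfl⟩, hW⟩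
    simp only at h1 h2 hS
    cases h1; cases h2
    obtain ⟨⟨p1, p2⟩, ⟨-, hp2⟩, hd, hp1⟩ := hWU (σ, σ') (τ, m2) hRW
    simp only at hp1 hp2 hd
    cases hp1; cases hp2
    exact ⟨m2, hd, hS⟩
end

section
/- Witness completeness for backward simulation: for any set Σ and relations c, d, R, S on Σ, the backward simulation judgment c | d : R ⇐∃ S holds if and only if there exists a relation W on Σ×Σ that is b-valid, i.e. satisfying (WCb) W ; Ṡ ⊆ Ṙ ; W ; Ṡ, (WOb) ⟨c] ; Ṡ ⊆ [hav⟩ ; W, and (WUb) W ; Ṡ ⊆ ⟨hav | d⟩. -/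
open BiKAT

/-- Witness completeness for backward simulation. -/
theorem stmt16 (S : Type*) (c d R Sp : S → S → Prop) :
    bsim c d R Sp ↔
      ∃ W : S × S → S × S → Prop,
        rincl (rcomp W (bitest Sp)) (rcomp (rcomp (bitest R) W) (bitest Sp)) ∧
        rincl (rcomp (lemb c) (bitest Sp)) (rcomp (remb hav) W) ∧
        rincl (rcomp W (bitest Sp)) (emb2 hav d) := by
  constructor
  · intro hb
    refine ⟨fun p q => R p.1 p.2 ∧ d p.2 q.2, ?_, ?_, ?_⟩
    · rintro p r ⟨q, ⟨hR, hd⟩, hSp, hq1, hq2⟩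
      exact ⟨q, ⟨p, ⟨hR, rfl, rfl⟩, hR, hd⟩, hSp, hq1, hq2⟩
    · rintro p r ⟨q, ⟨hc, hpq2⟩, hSp, hq1, hq2⟩
      obtain ⟨σ', hR, hd⟩ := hb p.1 q.1 q.2 hc hSp
      exact ⟨(p.1, σ'), ⟨trivial, rfl⟩, hR, by rw [hq2]; exact hd⟩
    · rintro p r ⟨q, ⟨hR, hd⟩, hSp, hq1, hq2⟩
      exact ⟨(r.1, p.2), ⟨trivial, rfl⟩, by rw [hq2]; exact hd, rfl⟩
  · rintro ⟨W, hC, hO, hU⟩ σ τ τ' hc hS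
    obtain ⟨m, ⟨_, hm1⟩, hW⟩ :=
      hO (σ, τ') (τ, τ') ⟨(τ, τ'), ⟨hc, rfl⟩, hS, rfl, rfl⟩
    obtain ⟨k, ⟨j, ⟨hR, hj1, hj2⟩, hWj⟩, hSk, hk1, hk2⟩ :=
      hC m (τ, τ') ⟨(τ, τ'), hW, hS, rfl, rfl⟩
    obtain ⟨n, ⟨_, hn2⟩, hd, hn1⟩ :=
      hU m (τ, τ') ⟨(τ, τ'), hW, hS, rfl, rfl⟩
    refine ⟨m.2, ?_, by rw [hn2]; exact hd⟩
    have h : σ = m.1 := hm1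
    rw [h]; exact hR
end

section
/- Witness composition for the forward-simulation sequence rule (eSeq): for any set Σ, relations c, c', d, d', P, R, Q on Σ, and relations Z, W on Σ×Σ, if Z is an f-valid witness for c | c' with pre-relation P and post-relation R (i.e. Ṗ;Z ⊆ Ṗ;Z;Ṙ, Ṗ;⟨c] ⊆ Z;[hav⟩, and Ṗ;Z ⊆ ⟨hav|c'⟩) and W is an f-valid witness for d | d' with pre-relation R and post-relation Q (i.e. Ṙ;W ⊆ Ṙ;W;Q̇, Ṙ;⟨d] ⊆ W;[hav⟩, and Ṙ;W ⊆ ⟨hav|d'⟩), then Z ; W is an f-valid witness for (c ; d) | (c' ; d') with pre-relation P and post-relation Q, i.e. Ṗ;(Z;W) ⊆ Ṗ;(Z;W);Q̇, Ṗ;⟨c;d] ⊆ (Z;W);[hav⟩, and Ṗ;(Z;W) ⊆ ⟨hav | c';d'⟩. -/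
open BiKAT

/-- Witness composition for the forward-simulation sequence rule eSeq. -/
theorem stmt17 (S : Type*) (c c' d d' P R Q : S → S → Prop)
    (Z W : S × S → S × S → Prop)
    (hZC : rincl (rcomp (bitest P) Z) (rcomp (rcomp (bitest P) Z) (bitest R)))
    (hZO : rincl (rcomp (bitest P) (lemb c)) (rcomp Z (remb hav)))
    (hZU : rincl (rcomp (bitest P) Z) (emb2 hav c'))
    (hWC : rincl (rcomp (bitest R) W) (rcomp (rcomp (bitest R) W) (bitest Q)))
    (hWO : rincl (rcomp (bitest R) (lemb d)) (rcomp W (remb hav)))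
    (hWU : rincl (rcomp (bitest R) W) (emb2 hav d')) :
    rincl (rcomp (bitest P) (rcomp Z W))
          (rcomp (rcomp (bitest P) (rcomp Z W)) (bitest Q)) ∧
    rincl (rcomp (bitest P) (lemb (rcomp c d))) (rcomp (rcomp Z W) (remb hav)) ∧
    rincl (rcomp (bitest P) (rcomp Z W)) (emb2 hav (rcomp c' d')) := by
  -- helper: from P x and Z x m, derive R m
  have hR : ∀ x m, P x.1 x.2 → Z x m → R m.1 m.2 := by
    intro x m hP hZ
    obtain ⟨u, _, hRu, hu1, hu2⟩ := hZC x m ⟨x, ⟨hP, rfl, rfl⟩, hZ⟩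
    rw [hu1, hu2]; exact hRu
  refine ⟨?_, ?_, ?_⟩
  · rintro x y ⟨x', ⟨hP, h1, h2⟩, m, hZ, hW⟩
    have hx : x' = x := Prod.ext h1 h2; subst hx
    have hRm := hR x' m hP hZ
    obtain ⟨u, _, hQu, hu1, hu2⟩ := hWC m y ⟨m, ⟨hRm, rfl, rfl⟩, hW⟩
    have hy : y = u := Prod.ext hu1 hu2
    subst hy
    exact ⟨y, ⟨x', ⟨hP, rfl, rfl⟩, m, hZ, hW⟩, hQu, rfl, rfl⟩
  · rintro x y ⟨x', ⟨hP, he1, he2⟩, ⟨u, hc, hd⟩, h2⟩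
    have hx : x' = x := Prod.ext he1 he2; subst hx
    obtain ⟨m, hZ, _, hm1⟩ := hZO x' (u, x'.2) ⟨x', ⟨hP, rfl, rfl⟩, hc, rfl⟩
    have hRm := hR x' m hP hZ
    obtain ⟨m', hW, _, hm'1⟩ := hWO m (y.1, m.2) ⟨m, ⟨hRm, rfl, rfl⟩, by simpa [hm1] using hd, rfl⟩
    exact ⟨m', ⟨m, hZ, hW⟩, trivial, by simp [hm'1]⟩
  · rintro x y ⟨x', ⟨hP, he1, he2⟩, m, hZ, hW⟩
    have hx : x' = x := Prod.ext he1 he2; subst hx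
    obtain ⟨q, ⟨_, hq2⟩, hc', hq1⟩ := hZU x' m ⟨x', ⟨hP, rfl, rfl⟩, hZ⟩
    have hRm := hR x' m hP hZ
    obtain ⟨q', ⟨_, hq'2⟩, hd', hq'1⟩ := hWU m y ⟨m, ⟨hRm, rfl, rfl⟩, hW⟩
    exact ⟨(y.1, x'.2), ⟨trivial, rfl⟩, ⟨m.2, by rw [hq2]; exact hc', by rw [hq'2]; exact hd'⟩, rfl⟩
end

section
/- Soundness of the forward-simulation while rule eWhL in the relational model: for any set Σ, relations c, c', P on Σ and subsets e, e' of Σ, suppose (i) for all σ, σ' with P σ σ', if σ' ∈ e' then σ ∈ e; (ii) the forward simulation judgment c | c' : (P ∧ ⌐e ∧ e'⌐) ⇒∃ P holds, where (P ∧ ⌐e ∧ e'⌐) σ σ' means P σ σ' ∧ σ ∈ e ∧ σ' ∈ e'; and (iii) the forward simulation judgment c | skip : (P ∧ ⌐e⌐) ⇒∃ P holds, where skip is the identity relation. Then the forward simulation judgment (while e do c) | (while e' do c') : P ⇒∃ (P ∧ ⌐¬e ∧ ¬e'⌐) holds, where while e do c := ([e];c)* ; [¬e]. -/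
open BiKAT

/-- Soundness of the forward-simulation while rule eWhL. -/
theorem stmt18 (S : Type*) (c c' P : S → S → Prop) (e e' : Set S)
    (h0 : ∀ σ σ', P σ σ' → σ' ∈ e' → σ ∈ e)
    (h1 : fsim c c' (fun σ σ' => P σ σ' ∧ σ ∈ e ∧ σ' ∈ e') P)
    (h2 : fsim c (fun x y => x = y) (fun σ σ' => P σ σ' ∧ σ ∈ e) P) :
    fsim (wh e c) (wh e' c') P (fun τ τ' => P τ τ' ∧ τ ∉ e ∧ τ' ∉ e') := by
  have key : ∀ σ μ, rstar (rcomp (test e) c) σ μ → ∀ σ', P σ σ' →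
      ∃ τ', rstar (rcomp (test e') c') σ' τ' ∧ P μ τ' := by
    intro σ μ h
    induction h using Relation.ReflTransGen.head_induction_on with
    | refl => intro σ' hP; exact ⟨σ', Relation.ReflTransGen.refl, hP⟩
    | head hstep hb ih =>
      rename_i a b
      intro σ' hP
      obtain ⟨y, ⟨hae, hy⟩, hc⟩ := hstep
      subst hy
      by_cases he' : σ' ∈ e'
      · obtain ⟨τ'', hc', hP'⟩ := h1 y σ' b ⟨hP, hae, he'⟩ hc
        obtain ⟨τ', hr, hPf⟩ := ih τ'' hP'
        exact ⟨τ', Relation.ReflTransGen.head ⟨σ', ⟨he', rfl⟩, hc'⟩ hr, hPf⟩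
      · obtain ⟨τ'', heq, hP'⟩ := h2 y σ' b ⟨hP, hae⟩ hc
        subst heq
        exact ih σ' hP'
  intro σ σ' τ hP hw
  obtain ⟨μ, hstar, hμ, hτ⟩ := hw
  subst hτ
  obtain ⟨τ', hr, hPf⟩ := key σ τ hstar σ' hP
  have hτ'e' : τ' ∉ e' := fun h => hμ (h0 τ τ' hPf h)
  exact ⟨τ', ⟨τ', hr, hτ'e', rfl⟩, hPf, hμ, hτ'e'⟩
end

section
/- Soundness of the backward-simulation while rule bWh in the relational model: for any set Σ, relations c, c', P on Σ and subsets e, e' of Σ, if the backward simulation judgment c | c' : (P ∧ ⌐e ∧ e'⌐) ⇐∃ P holds, where (P ∧ ⌐e ∧ e'⌐) σ σ' means P σ σ' ∧ σ ∈ e ∧ σ' ∈ e', then the backward simulation judgment (while e do c) | (while e' do c') : P ⇐∃ (P ∧ ⌐¬e ∧ ¬e'⌐) holds, where while e do c := ([e];c)* ; [¬e] and (P ∧ ⌐¬e ∧ ¬e'⌐) τ τ' means P τ τ' ∧ τ ∉ e ∧ τ' ∉ e'. -/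
open BiKAT

/-- Soundness of the backward-simulation while rule bWh. -/
theorem stmt19 (S : Type*) (c c' P : S → S → Prop) (e e' : Set S)
    (h1 : bsim c c' (fun σ σ' => P σ σ' ∧ σ ∈ e ∧ σ' ∈ e') P) :
    bsim (wh e c) (wh e' c') P (fun τ τ' => P τ τ' ∧ τ ∉ e ∧ τ' ∉ e') := by
  intro σ τ τ' hc hpost
  obtain ⟨hP, hτ, hτ'⟩ := hpost
  obtain ⟨mid, hstar, hmid, heq⟩ := hc
  subst heq
  have key : ∀ s, rstar (rcomp (test e) c) s τ →
      ∃ s', P s s' ∧ rstar (rcomp (test e') c') s' τ' := by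
    intro s hs
    induction hs using Relation.ReflTransGen.head_induction_on with
    | refl => exact ⟨τ', hP, Relation.ReflTransGen.refl⟩
    | head hstep _ ih =>
      obtain ⟨b', hPb, hb'⟩ := ih
      obtain ⟨m, ⟨hse, rfl⟩, hcb⟩ := hstep
      obtain ⟨s', ⟨hPs, _, hse'⟩, hc'⟩ := h1 _ _ _ hcb hPb
      exact ⟨s', hPs, Relation.ReflTransGen.head ⟨s', ⟨hse', rfl⟩, hc'⟩ hb'⟩
  obtain ⟨σ', hPσ, hstar'⟩ := key σ hstar
  exact ⟨σ', hPσ, τ', hstar', hτ', rfl⟩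
end
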